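/- A curve c : I → R^n defined on an open interval is affine (i.e., of the form c(t) = a + tb) if and only if it is locally odd: for every b in I there exists t(b) > 0 such that c(b+t) − c(b) = c(b) − c(b−t) for all |t| < t(b). -/

import Mathlib

/-- A continuous real function on `[a,b]` vanishing at the endpoints which is locally
odd at every interior point is nonpositive. -/
lemma aux_le (f : ℝ → ℝ) (a b : ℝ) (hab : a < b)
    (hf : ContinuousOn f (Set.Icc a b)) (ha : f a = 0) (hb : f b = 0)
    (hodd : ∀ x ∈ Set.Ioo a b, ∃ ε > 0, ∀ t : ℝ, |t| < ε →
      f (x + t) - f x = f x - f (x - t)) :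
    ∀ x ∈ Set.Icc a b, f x ≤ 0 := by
  by_contra h
  push_neg at h
  obtain ⟨y, hy, hy0⟩ := h
  obtain ⟨z, hz, hzmax⟩ := isCompact_Icc.exists_isMaxOn ⟨a, Set.left_mem_Icc.2 hab.le⟩ hf
  set M := f z with hM
  have hMpos : 0 < M := lt_of_lt_of_le hy0 (hzmax hy)
  set K := Set.Icc a b ∩ f ⁻¹' {M} with hK
  have hKne : K.Nonempty := ⟨z, hz, rfl⟩
  have hKclosed : IsClosed K := hf.preimage_isClosed_of_isClosed isClosed_Icc isClosed_singleton
  have hKbdd : BddAbove K := ⟨b, fun x hx => hx.1.2⟩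
  set x0 := sSup K with hx0
  have hx0K : x0 ∈ K := hKclosed.csSup_mem hKne hKbdd
  obtain ⟨⟨hx0a, hx0b⟩, hx0M⟩ := hx0K
  have hfx0 : f x0 = M := hx0M
  have hx0a' : a < x0 := by
    rcases hx0a.lt_or_eq with h | h
    · exact h
    · exfalso; rw [← h, ha] at hfx0; linarith
  have hx0b' : x0 < b := by
    rcases hx0b.lt_or_eq with h | h
    · exact h
    · exfalso; rw [h, hb] at hfx0; linarith
  obtain ⟨ε, hε, hεodd⟩ := hodd x0 ⟨hx0a', hx0b'⟩
  set t := min (ε / 2) (min ((b - x0) / 2) ((x0 - a) / 2)) with ht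
  have htpos : 0 < t := by
    apply lt_min (by linarith)
    apply lt_min <;> linarith
  have ht1 : t < ε := lt_of_le_of_lt (min_le_left _ _) (by linarith)
  have ht2 : t ≤ (b - x0) / 2 := le_trans (min_le_right _ _) (min_le_left _ _)
  have ht3 : t ≤ (x0 - a) / 2 := le_trans (min_le_right _ _) (min_le_right _ _)
  have habs : |t| < ε := by rw [abs_of_pos htpos]; exact ht1
  have heq := hεodd t habs
  have hmem1 : x0 + t ∈ Set.Icc a b := ⟨by linarith, by linarith⟩
  have hmem2 : x0 - t ∈ Set.Icc a b := ⟨by linarith, by linarith⟩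
  have hle1 : f (x0 + t) ≤ M := hzmax hmem1
  have hlt1 : f (x0 + t) < M := by
    rcases hle1.lt_or_eq with h | h
    · exact h
    · exfalso
      have : x0 + t ∈ K := ⟨hmem1, h⟩
      have := le_csSup hKbdd this
      linarith
  have hle2 : f (x0 - t) ≤ M := hzmax hmem2
  rw [hfx0] at heq
  linarith

lemma aux_eq (f : ℝ → ℝ) (a b : ℝ) (hab : a < b)
    (hf : ContinuousOn f (Set.Icc a b)) (ha : f a = 0) (hb : f b = 0)
    (hodd : ∀ x ∈ Set.Ioo a b, ∃ ε > 0, ∀ t : ℝ, |t| < ε →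
      f (x + t) - f x = f x - f (x - t)) :
    ∀ x ∈ Set.Icc a b, f x = 0 := by
  intro x hx
  have h1 := aux_le f a b hab hf ha hb hodd x hx
  have h2 := aux_le (fun s => -f s) a b hab hf.neg (by simpa using ha) (by simpa using hb)
    (fun y hy => by
      obtain ⟨ε, hε, hεodd⟩ := hodd y hy
      exact ⟨ε, hε, fun t ht => by have := hεodd t ht; linarith⟩) x hx
  linarith

/-- Locally odd continuous curves coincide with the chord on any subinterval. -/
lemma aux_chord {n : ℕ} (I : Set ℝ) (hconn : I.OrdConnected)
    (c : ℝ → EuclideanSpace ℝ (Fin n)) (hc : ContinuousOn c I)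
    (H : ∀ b ∈ I, ∃ ε > 0, ∀ t : ℝ, |t| < ε → c (b + t) - c b = c b - c (b - t))
    (a b : ℝ) (ha : a ∈ I) (hb : b ∈ I) (hab : a < b) :
    ∀ t ∈ Set.Icc a b, c t = c a + ((t - a) / (b - a)) • (c b - c a) := by
  have hsub : Set.Icc a b ⊆ I := hconn.out ha hb
  have hba : b - a ≠ 0 := sub_ne_zero.2 hab.ne'
  intro t ht
  ext i
  set f : ℝ → ℝ := fun x => c x i - (c a i + ((x - a) / (b - a)) * (c b i - c a i)) with hf
  have key : f t = 0 := by
    refine aux_eq f a b hab ?_ ?_ ?_ ?_ t ht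
    · apply ContinuousOn.sub
      · exact (EuclideanSpace.proj (𝕜 := ℝ) i).continuous.comp_continuousOn (hc.mono hsub)
      · fun_prop
    · simp [hf]
    · simp only [hf]
      rw [div_self hba]; ring
    · intro x hx
      obtain ⟨ε, hε, hεodd⟩ := H x (hsub (Set.Ioo_subset_Icc_self hx))
      refine ⟨ε, hε, fun s hs => ?_⟩
      have hv := hεodd s hs
      have hvi : c (x + s) i - c x i = c x i - c (x - s) i := by
        have := congrArg (fun u : EuclideanSpace ℝ (Fin n) => u i) hv
        simpa [PiLp.sub_apply] using this
      simp only [hf]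
      have harith : (x + s - a) / (b - a) * (c b i - c a i)
          + (x - s - a) / (b - a) * (c b i - c a i)
          = 2 * ((x - a) / (b - a) * (c b i - c a i)) := by
        field_simp; ring
      linarith
  have : c t i = c a i + ((t - a) / (b - a)) * (c b i - c a i) := by
    simp only [hf] at key; linarith
  simpa [PiLp.add_apply, PiLp.smul_apply, PiLp.sub_apply, smul_eq_mul] using this

/-- Linearity criterion: a continuous curve `c : I → ℝⁿ` on an open interval `I` is
affine (of the form `c(t) = p + t v`) if and only if it is locally odd: for each
`b ∈ I` there is `t(b) > 0` (with `(b − t(b), b + t(b)) ⊆ I`) such that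
`c(b+t) − c(b) = c(b) − c(b−t)` for all `|t| < t(b)`. -/
theorem stmt_14 {n : ℕ} (I : Set ℝ) (hopen : IsOpen I) (hconn : I.OrdConnected)
    (c : ℝ → EuclideanSpace ℝ (Fin n)) (hc : ContinuousOn c I) :
    (∃ p v : EuclideanSpace ℝ (Fin n), ∀ t ∈ I, c t = p + t • v) ↔
    (∀ b ∈ I, ∃ ε > 0, Set.Ioo (b - ε) (b + ε) ⊆ I ∧
      ∀ t : ℝ, |t| < ε → c (b + t) - c b = c b - c (b - t)) := by
  constructor
  · rintro ⟨p, v, hpv⟩ b hb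
    obtain ⟨ε, hε, hball⟩ := Metric.isOpen_iff.1 hopen b hb
    refine ⟨ε, hε, by rw [← Real.ball_eq_Ioo]; exact hball, fun t ht => ?_⟩
    have h1 : b + t ∈ I := hball (by simp [Real.dist_eq, abs_of_nonneg, ht])
    have h2 : b - t ∈ I := hball (by simpa [Real.dist_eq, abs_sub_comm] using ht)
    rw [hpv _ h1, hpv _ hb, hpv _ h2]
    module
  · intro H
    have H' : ∀ b ∈ I, ∃ ε > 0, ∀ t : ℝ, |t| < ε → c (b + t) - c b = c b - c (b - t) := by
      intro b hb
      obtain ⟨ε, hε, _, hodd⟩ := H b hb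
      exact ⟨ε, hε, hodd⟩
    rcases Set.eq_empty_or_nonempty I with hI | ⟨a0, ha0⟩
    · exact ⟨0, 0, fun t ht => by rw [hI] at ht; exact absurd ht (Set.notMem_empty t)⟩
    obtain ⟨b0, hb0, ha0b0⟩ : ∃ b0 ∈ I, a0 < b0 := by
      obtain ⟨δ, hδ, hball⟩ := Metric.isOpen_iff.1 hopen a0 ha0
      refine ⟨a0 + δ / 2, hball ?_, by linarith⟩
      simp only [Metric.mem_ball, Real.dist_eq]
      rw [abs_of_nonneg (by linarith)]
      linarith
    have hE : b0 - a0 ≠ 0 := sub_ne_zero.2 ha0b0.ne'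
    refine ⟨c a0 - a0 • ((b0 - a0)⁻¹ • (c b0 - c a0)),
      (b0 - a0)⁻¹ • (c b0 - c a0), fun t ht => ?_⟩
    set a := min t a0 with hadef
    set b := max t b0 with hbdef
    have haI : a ∈ I := by rcases min_cases t a0 with ⟨h, _⟩ | ⟨h, _⟩ <;> rw [hadef, h] <;>
      assumption
    have hbI : b ∈ I := by rcases max_cases t b0 with ⟨h, _⟩ | ⟨h, _⟩ <;> rw [hbdef, h] <;>
      assumption
    have hab : a < b := lt_of_le_of_lt (min_le_right t a0)
      (lt_of_lt_of_le ha0b0 (le_max_right t b0))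
    have hD : b - a ≠ 0 := sub_ne_zero.2 hab.ne'
    have chord := aux_chord I hconn c hc H' a b haI hbI hab
    have e1 := chord t ⟨min_le_left t a0, le_max_left t b0⟩
    have e2 := chord a0 ⟨min_le_right t a0, le_trans ha0b0.le (le_max_right t b0)⟩
    have e3 := chord b0 ⟨le_trans (min_le_right t a0) ha0b0.le, le_max_right t b0⟩
    rw [e1, e2, e3]
    have hD' : -a + b ≠ 0 := by intro h; apply hD; linarith
    have hE' : -a0 + b0 ≠ 0 := by intro h; apply hE; linarith
    clear_value a b
    match_scalars
    all_goals field_simp [hD', hE']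
    all_goals ring
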